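/- Let G be a connected triangle-free graph on n vertices and m edges with PI_w(G) = n²m. Then G is a complete bipartite graph K_{a,b} with a + b = n. -/

import Mathlib

open Finset
open scoped Classical

/-- Number of vertices strictly closer to `u` than to `v`. -/
noncomputable def ncl {V : Type*} [Fintype V] (G : SimpleGraph V) (u v : V) : ℕ :=
  (Finset.univ.filter fun x => G.dist x u < G.dist x v).card

/-- Weighted vertex PI index: each edge `uv` contributes
`(deg u + deg v) * (n_u(e) + n_v(e))`; each edge is counted twice in the double sum. -/
noncomputable def PIw {V : Type*} [Fintype V] (G : SimpleGraph V) : ℝ :=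
  (∑ u, ∑ v, if G.Adj u v then
    (((G.degree u + G.degree v : ℕ) : ℝ) * ((ncl G u v + ncl G v u : ℕ) : ℝ)) else 0) / 2

lemma aux_nbr_disjoint {V : Type*} [Fintype V] (G : SimpleGraph V) (htf : G.CliqueFree 3)
    {u v : V} (h : G.Adj u v) : Disjoint (G.neighborFinset u) (G.neighborFinset v) := by
  rw [Finset.disjoint_left]
  intro x hxu hxv
  rw [SimpleGraph.mem_neighborFinset] at hxu hxv
  exact htf {u, v, x} (SimpleGraph.is3Clique_triple_iff.mpr ⟨h, hxu, hxv⟩)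

lemma aux_compl_eq {V : Type*} [Fintype V] (s t : Finset V) (hd : Disjoint s t)
    (hu : s ∪ t = univ) : t = univ \ s := by
  ext x
  simp only [mem_sdiff, mem_univ, true_and]
  constructor
  · intro hx; exact fun hs => Finset.disjoint_left.mp hd hs hx
  · intro hx
    have := Finset.mem_union.mp (hu ▸ mem_univ x)
    tauto

lemma aux_deg_add_le {V : Type*} [Fintype V] (G : SimpleGraph V) (htf : G.CliqueFree 3)
    {u v : V} (h : G.Adj u v) : G.degree u + G.degree v ≤ Fintype.card V := by
  classical
  have hd := aux_nbr_disjoint G htf h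
  calc G.degree u + G.degree v
      = (G.neighborFinset u).card + (G.neighborFinset v).card := rfl
    _ = (G.neighborFinset u ∪ G.neighborFinset v).card := (Finset.card_union_of_disjoint hd).symm
    _ ≤ Fintype.card V := Finset.card_le_univ _

lemma aux_ncl_add_le {V : Type*} [Fintype V] (G : SimpleGraph V) (u v : V) :
    ncl G u v + ncl G v u ≤ Fintype.card V := by
  classical
  have hd : Disjoint (Finset.univ.filter fun x => G.dist x u < G.dist x v)
      (Finset.univ.filter fun x => G.dist x v < G.dist x u) := by
    rw [Finset.disjoint_left]
    intro x hx hx'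
    simp only [mem_filter] at hx hx'
    omega
  calc ncl G u v + ncl G v u
      = ((Finset.univ.filter fun x => G.dist x u < G.dist x v) ∪
          (Finset.univ.filter fun x => G.dist x v < G.dist x u)).card :=
        (Finset.card_union_of_disjoint hd).symm
    _ ≤ Fintype.card V := Finset.card_le_univ _

/-- Structure lemma: if every edge has degree sum `n`, a triangle-free graph with an edge
is complete bipartite. -/
lemma aux_structure {V : Type*} [Fintype V] (G : SimpleGraph V) (htf : G.CliqueFree 3)
    {u0 v0 : V} (h0 : G.Adj u0 v0)
    (key : ∀ u v : V, G.Adj u v → G.degree u + G.degree v = Fintype.card V) :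
    ∃ a b : ℕ, a + b = Fintype.card V ∧
      Nonempty (G ≃g completeBipartiteGraph (Fin a) (Fin b)) := by
  classical
  set A := G.neighborFinset v0 with hA
  set B := G.neighborFinset u0 with hB
  have hdisj : Disjoint A B := (aux_nbr_disjoint G htf h0.symm)
  have hcardAB : A.card + B.card = Fintype.card V := by
    have h := key u0 v0 h0
    have h1 : A.card = G.degree v0 := rfl
    have h2 : B.card = G.degree u0 := rfl
    omega
  have hunion : A ∪ B = univ := by
    apply Finset.eq_univ_of_card
    rw [Finset.card_union_of_disjoint hdisj, hcardAB]
  have hBcompl : B = univ \ A := aux_compl_eq A B hdisj hunion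
  have hNA : ∀ x ∈ A, G.neighborFinset x = B := by
    intro x hx
    rw [SimpleGraph.mem_neighborFinset] at hx
    have hxv : G.Adj x v0 := hx.symm
    have hd : Disjoint (G.neighborFinset x) A := aux_nbr_disjoint G htf hxv
    have hcard : (G.neighborFinset x).card + A.card = Fintype.card V := key x v0 hxv
    have hu2 : G.neighborFinset x ∪ A = univ := by
      apply Finset.eq_univ_of_card
      rw [Finset.card_union_of_disjoint hd, hcard]
    have hAc : A = univ \ G.neighborFinset x := aux_compl_eq _ _ hd hu2
    have hNc : G.neighborFinset x = univ \ A :=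
      aux_compl_eq A _ (hd.symm) (by rw [Finset.union_comm]; exact hu2)
    rw [hBcompl, hNc]
  have hNB : ∀ x ∈ B, G.neighborFinset x = A := by
    intro x hx
    rw [SimpleGraph.mem_neighborFinset] at hx
    have hxu : G.Adj x u0 := hx.symm
    have hd : Disjoint (G.neighborFinset x) B := aux_nbr_disjoint G htf hxu
    have hcard : (G.neighborFinset x).card + B.card = Fintype.card V := key x u0 hxu
    have hu2 : G.neighborFinset x ∪ B = univ := by
      apply Finset.eq_univ_of_card
      rw [Finset.card_union_of_disjoint hd, hcard]
    have hNc : G.neighborFinset x = univ \ B :=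
      aux_compl_eq B _ (hd.symm) (by rw [Finset.union_comm]; exact hu2)
    have hAc : A = univ \ B :=
      aux_compl_eq B A hdisj.symm (by rw [Finset.union_comm]; exact hunion)
    rw [hNc, ← hAc]
  have hAdjIff : ∀ x y : V, G.Adj x y ↔ (x ∈ A ∧ y ∉ A) ∨ (x ∉ A ∧ y ∈ A) := by
    intro x y
    have hxmem := Finset.mem_union.mp (hunion ▸ mem_univ x)
    have hymem := Finset.mem_union.mp (hunion ▸ mem_univ y)
    have hBnotA : ∀ z : V, z ∈ B ↔ z ∉ A := by
      intro z
      rw [hBcompl]; simp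
    constructor
    · intro hadj
      rcases hxmem with hx | hx
      · left
        refine ⟨hx, ?_⟩
        have : y ∈ B := by rw [← hNA x hx, SimpleGraph.mem_neighborFinset]; exact hadj
        exact (hBnotA y).mp this
      · right
        refine ⟨(hBnotA x).mp hx, ?_⟩
        rw [← hNB x hx, SimpleGraph.mem_neighborFinset]; exact hadj
    · rintro (⟨hx, hy⟩ | ⟨hx, hy⟩)
      · have hyB : y ∈ B := hymem.resolve_left hy
        have : y ∈ G.neighborFinset x := by rw [hNA x hx]; exact hyB
        rwa [SimpleGraph.mem_neighborFinset] at this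
      · have hxB : x ∈ B := hxmem.resolve_left hx
        have : y ∈ G.neighborFinset x := by rw [hNB x hxB]; exact hy
        rwa [SimpleGraph.mem_neighborFinset] at this
  refine ⟨A.card, B.card, hcardAB, ?_⟩
  have eA : {x : V // x ∈ A} ≃ Fin A.card := Fintype.equivFinOfCardEq (Fintype.card_coe A)
  have eB : {x : V // ¬ x ∈ A} ≃ Fin B.card :=
    (Equiv.subtypeEquivRight (fun z => by rw [hBcompl]; simp [Iff.comm])).symm.trans
      (Fintype.equivFinOfCardEq (Fintype.card_coe B))
  let e : V ≃ Fin A.card ⊕ Fin B.card :=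
    (Equiv.sumCompl (fun x => x ∈ A)).symm.trans (Equiv.sumCongr eA eB)
  have hleft : ∀ x : V, (e x).isLeft = true ↔ x ∈ A := by
    intro x
    by_cases hx : x ∈ A
    · simp [e, Equiv.sumCompl_symm_apply_of_pos hx, hx]
    · simp [e, Equiv.sumCompl_symm_apply_of_neg hx, hx]
  have hright : ∀ x : V, (e x).isRight = true ↔ x ∉ A := by
    intro x
    rw [← Sum.not_isLeft, not_iff_not]
    exact hleft x
  exact ⟨⟨e, by
    intro x y
    simp only [completeBipartiteGraph_adj]
    rw [hleft, hright, hright, hleft, hAdjIff x y]⟩⟩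

theorem PIw_eq_n2m_iff_completeBipartite {V : Type*} [Fintype V] (G : SimpleGraph V)
    (hconn : G.Connected) (htf : G.CliqueFree 3)
    (heq : PIw G = (Fintype.card V : ℝ) ^ 2 * (G.edgeFinset.card : ℝ)) :
    ∃ a b : ℕ, a + b = Fintype.card V ∧
      Nonempty (G ≃g completeBipartiteGraph (Fin a) (Fin b)) := by
  classical
  set n := Fintype.card V with hn
  by_cases hedge : ∃ u v : V, G.Adj u v
  · obtain ⟨u0, v0, h0⟩ := hedge
    set f : V → V → ℕ := fun u v =>
      if G.Adj u v then (G.degree u + G.degree v) * (ncl G u v + ncl G v u) else 0 with hf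
    have hcast : PIw G = ((∑ u, ∑ v, f u v : ℕ) : ℝ) / 2 := by
      unfold PIw
      congr 1
      push_cast
      refine Finset.sum_congr rfl fun u _ => Finset.sum_congr rfl fun v _ => ?_
      by_cases h : G.Adj u v <;> simp [hf, h] <;> push_cast <;> ring
    have hg : (∑ u, ∑ v, (if G.Adj u v then n ^ 2 else 0)) = 2 * n ^ 2 * G.edgeFinset.card := by
      have h1 : ∀ u : V, (∑ v, (if G.Adj u v then n ^ 2 else 0)) = G.degree u * n ^ 2 := by
        intro u
        rw [← Finset.sum_filter, ← SimpleGraph.neighborFinset_eq_filter, Finset.sum_const,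
          smul_eq_mul]
        rfl
      have h2 : (∑ u, G.degree u * n ^ 2) = (∑ u, G.degree u) * n ^ 2 :=
        (Finset.sum_mul _ _ _).symm
      rw [Finset.sum_congr rfl fun u _ => h1 u, h2,
        SimpleGraph.sum_degrees_eq_twice_card_edges]
      ring
    have hS : (∑ u, ∑ v, f u v) = 2 * n ^ 2 * G.edgeFinset.card := by
      have hR : ((∑ u, ∑ v, f u v : ℕ) : ℝ) = 2 * (n : ℝ) ^ 2 * (G.edgeFinset.card : ℝ) := by
        rw [hcast] at heq
        rw [hn] at heq ⊢
        linarith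
      exact_mod_cast hR
    have hle : ∀ p : V × V, p ∈ (univ : Finset V) ×ˢ (univ : Finset V) →
        f p.1 p.2 ≤ (if G.Adj p.1 p.2 then n ^ 2 else 0) := by
      rintro ⟨u, v⟩ -
      by_cases h : G.Adj u v
      · simp only [hf, h, if_true]
        have h1 := aux_deg_add_le G htf h
        have h2 := aux_ncl_add_le G u v
        calc (G.degree u + G.degree v) * (ncl G u v + ncl G v u)
            ≤ n * n := Nat.mul_le_mul h1 h2
          _ = n ^ 2 := (sq n).symm
      · simp [hf, h]
    have hsum_eq : (∑ p ∈ (univ : Finset V) ×ˢ (univ : Finset V), f p.1 p.2)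
        = ∑ p ∈ (univ : Finset V) ×ˢ (univ : Finset V), (if G.Adj p.1 p.2 then n ^ 2 else 0) := by
      rw [Finset.sum_product, Finset.sum_product, hS, hg]
    have hpt := (Finset.sum_eq_sum_iff_of_le hle).mp hsum_eq
    have key : ∀ u v : V, G.Adj u v → G.degree u + G.degree v = Fintype.card V := by
      intro u v h
      have hmem : (u, v) ∈ (univ : Finset V) ×ˢ (univ : Finset V) := by simp
      have heqp := hpt (u, v) hmem
      simp only [hf, h, if_true] at heqp
      have h1 := aux_deg_add_le G htf h
      have h2 := aux_ncl_add_le G u v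
      have hnpos : 0 < n := by
        rw [hn]
        exact Fintype.card_pos_iff.mpr ⟨u⟩
      rw [← hn]
      by_contra hne
      have hlt : G.degree u + G.degree v < n := lt_of_le_of_ne h1 hne
      have : (G.degree u + G.degree v) * (ncl G u v + ncl G v u) < n ^ 2 := by
        calc (G.degree u + G.degree v) * (ncl G u v + ncl G v u)
            ≤ (G.degree u + G.degree v) * n := Nat.mul_le_mul_left _ h2
          _ < n * n := Nat.mul_lt_mul_of_lt_of_le hlt le_rfl hnpos
          _ = n ^ 2 := (sq n).symm
      omega
    exact aux_structure G htf h0 key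
  · push_neg at hedge
    refine ⟨n, 0, by simp, ?_⟩
    let e : V ≃ Fin n ⊕ Fin 0 :=
      (Fintype.equivFin V).trans (Equiv.sumEmpty (Fin n) (Fin 0)).symm
    refine ⟨⟨e, ?_⟩⟩
    intro x y
    simp only [completeBipartiteGraph_adj]
    constructor
    · rintro (⟨-, hr⟩ | ⟨hr, -⟩) <;> rw [Sum.isRight_iff] at hr <;>
        obtain ⟨j, -⟩ := hr <;> exact j.elim0
    · intro h; exact absurd h (hedge x y)
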